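/- Let n be a perfect square and P = {0,1,...,n^{1/2}} × {0,1,...,n^{1/2}} ⊂ ℤ². For 1/2 ≤ s ≤ 1 and r = n^{s−1/2}, there exists a set G ⊂ P×P of pairs of distinct points with |G| ≥ c·n^{1+s} whose set of spanned directions S(G) = {(p−q)/|p−q| : (p,q) ∈ G} has cardinality at most C·n^{2s−1}, while no line contains more than n^{1/2}+1 points of P. -/

import Mathlib

noncomputable section
open scoped Classical

/-- Euclidean distance in the plane (modeled as `ℝ × ℝ`). -/
def ed (p q : ℝ × ℝ) : ℝ := Real.sqrt ((p.1 - q.1)^2 + (p.2 - q.2)^2)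

lemma sum_inv_sq_le (N : ℕ) :
    ∑ d ∈ Finset.Icc 2 N, (1:ℝ)/(d:ℝ)^2 ≤ 3/4 := by
  have key : ∀ N : ℕ, 1 ≤ N → ∑ d ∈ Finset.Icc 2 N, (1:ℝ)/(d:ℝ)^2
      ≤ 3/4 - (1/2)*(1/(N:ℝ) + 1/((N:ℝ)+1)) := by
    intro N hN
    induction N with
    | zero => omega
    | succ M ih =>
      rcases Nat.eq_or_lt_of_le hN with h1 | h1
      · simp [← h1]; norm_num
      · have hM : 1 ≤ M := by omega
        have hM0 : (0:ℝ) < M := by exact_mod_cast hM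
        rw [Finset.sum_Icc_succ_top (by omega : 2 ≤ M + 1)]
        have h2 : (1:ℝ)/((M:ℝ)+1)^2 ≤ (1/2)*(1/(M:ℝ) - 1/((M:ℝ)+2)) := by
          have e : (1/2)*(1/(M:ℝ) - 1/((M:ℝ)+2)) = 1/((M:ℝ)*((M:ℝ)+2)) := by
            field_simp
            ring
          rw [e, div_le_div_iff₀ (by positivity) (by positivity)]
          nlinarith
        have h3 := ih hM
        have e2 : (1:ℝ)/((M:ℝ)+1+1) = 1/((M:ℝ)+2) := by ring
        push_cast
        rw [e2]
        linarith
  rcases Nat.lt_or_ge N 2 with h | h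
  · have : Finset.Icc 2 N = ∅ := by apply Finset.Icc_eq_empty; omega
    simp [this]; norm_num
  · have h3 := key N (by omega)
    have hN : (0:ℝ) < N := by positivity
    have h4 : 0 ≤ 1/(N:ℝ) := by positivity
    have h5 : 0 ≤ 1/((N:ℝ)+1) := by positivity
    linarith

lemma coprime_count (R : ℕ) :
    (R:ℝ)^2 ≤ 4 * (((Finset.Icc 1 R ×ˢ Finset.Icc 1 R).filter
      (fun ab => Nat.gcd ab.1 ab.2 = 1)).card : ℝ) := by
  classical
  set T := Finset.Icc 1 R ×ˢ Finset.Icc 1 R with hT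
  have hTcard : T.card = R^2 := by
    simp [hT, Nat.card_Icc, sq]
  have hsplit := Finset.card_filter_add_card_filter_not
    (s := T) (p := fun ab => Nat.gcd ab.1 ab.2 = 1)
  set A := T.filter (fun ab => Nat.gcd ab.1 ab.2 = 1) with hA
  set B := T.filter (fun ab => ¬ Nat.gcd ab.1 ab.2 = 1) with hB
  have hBsub : B ⊆ (Finset.Icc 2 R).biUnion
      (fun d => T.filter (fun ab => d ∣ ab.1 ∧ d ∣ ab.2)) := by
    intro ab hab
    rw [hB, Finset.mem_filter] at hab
    obtain ⟨habT, hg⟩ := hab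
    have hab1 : ab.1 ∈ Finset.Icc 1 R := (Finset.mem_product.1 habT).1
    have h1 : 1 ≤ ab.1 ∧ ab.1 ≤ R := Finset.mem_Icc.1 hab1
    have hgpos : 1 ≤ Nat.gcd ab.1 ab.2 := Nat.le_of_lt_succ (by
      have := Nat.gcd_pos_of_pos_left ab.2 (by omega : 0 < ab.1)
      omega)
    have hg2 : 2 ≤ Nat.gcd ab.1 ab.2 := by omega
    have hgle : Nat.gcd ab.1 ab.2 ≤ R := le_trans (Nat.gcd_le_left _ (by omega)) h1.2
    refine Finset.mem_biUnion.2 ⟨Nat.gcd ab.1 ab.2, Finset.mem_Icc.2 ⟨hg2, hgle⟩, ?_⟩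
    exact Finset.mem_filter.2 ⟨habT, Nat.gcd_dvd_left _ _, Nat.gcd_dvd_right _ _⟩
  have hcard_d : ∀ d, (T.filter (fun ab => d ∣ ab.1 ∧ d ∣ ab.2)).card = (R/d)^2 := by
    intro d
    have : T.filter (fun ab => d ∣ ab.1 ∧ d ∣ ab.2)
        = ((Finset.Icc 1 R).filter (fun a => d ∣ a)) ×ˢ
          ((Finset.Icc 1 R).filter (fun b => d ∣ b)) := by
      rw [hT, Finset.filter_product]
    rw [this, Finset.card_product]
    have hIcc : Finset.Icc 1 R = Finset.Ioc 0 R := rfl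
    rw [hIcc, Nat.Ioc_filter_dvd_card_eq_div, sq]
  have hBcard : (B.card : ℝ) ≤ 3/4 * (R:ℝ)^2 := by
    have h1 : B.card ≤ ∑ d ∈ Finset.Icc 2 R, (R/d)^2 := by
      calc B.card ≤ ((Finset.Icc 2 R).biUnion
          (fun d => T.filter (fun ab => d ∣ ab.1 ∧ d ∣ ab.2))).card :=
            Finset.card_le_card hBsub
        _ ≤ ∑ d ∈ Finset.Icc 2 R, (T.filter (fun ab => d ∣ ab.1 ∧ d ∣ ab.2)).card :=
            Finset.card_biUnion_le
        _ = ∑ d ∈ Finset.Icc 2 R, (R/d)^2 := by simp [hcard_d]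
    have h2 : ((∑ d ∈ Finset.Icc 2 R, (R/d)^2 : ℕ) : ℝ)
        ≤ ∑ d ∈ Finset.Icc 2 R, (R:ℝ)^2 * (1/(d:ℝ)^2) := by
      push_cast
      apply Finset.sum_le_sum
      intro d hd
      have hd2 : 2 ≤ d := (Finset.mem_Icc.1 hd).1
      have hdpos : (0:ℝ) < d := by positivity
      have := Nat.cast_div_le (α := ℝ) (m := R) (n := d)
      have hsq : ((R/d : ℕ):ℝ)^2 ≤ ((R:ℝ)/(d:ℝ))^2 := by
        apply pow_le_pow_left₀ (by positivity) this
      calc ((R/d : ℕ):ℝ)^2 ≤ ((R:ℝ)/(d:ℝ))^2 := hsq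
        _ = (R:ℝ)^2 * (1/(d:ℝ)^2) := by field_simp
    have h3 : ∑ d ∈ Finset.Icc 2 R, (R:ℝ)^2 * (1/(d:ℝ)^2) ≤ (R:ℝ)^2 * (3/4) := by
      rw [← Finset.mul_sum]
      apply mul_le_mul_of_nonneg_left (sum_inv_sq_le R) (by positivity)
    have h1' : (B.card : ℝ) ≤ ((∑ d ∈ Finset.Icc 2 R, (R/d)^2 : ℕ) : ℝ) := by
      exact_mod_cast h1
    linarith
  have hAB : (A.card : ℝ) + B.card = (R:ℝ)^2 := by
    have := hsplit.trans hTcard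
    exact_mod_cast congrArg (Nat.cast (R := ℝ)) this
  linarith

lemma dir_eq (a b k x y : ℕ) (ha : 1 ≤ a) (hk : 1 ≤ k) :
    (ed ((x:ℝ),(y:ℝ)) (((x + k*a : ℕ):ℝ), ((y + k*b : ℕ):ℝ)))⁻¹ •
      (((x:ℝ),(y:ℝ)) - (((x + k*a : ℕ):ℝ), ((y + k*b : ℕ):ℝ)))
    = ((Real.sqrt ((a:ℝ)^2 + (b:ℝ)^2))⁻¹ * (-(a:ℝ)),
       (Real.sqrt ((a:ℝ)^2 + (b:ℝ)^2))⁻¹ * (-(b:ℝ))) := by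
  have hk0 : (0:ℝ) < k := by exact_mod_cast hk
  have ha0 : (1:ℝ) ≤ a := by exact_mod_cast ha
  have hS0 : (0:ℝ) < (a:ℝ)^2 + (b:ℝ)^2 := by nlinarith [sq_nonneg (b:ℝ)]
  have hS : 0 < Real.sqrt ((a:ℝ)^2 + (b:ℝ)^2) := Real.sqrt_pos.2 hS0
  have hed : ed ((x:ℝ),(y:ℝ)) (((x + k*a : ℕ):ℝ), ((y + k*b : ℕ):ℝ))
      = (k:ℝ) * Real.sqrt ((a:ℝ)^2 + (b:ℝ)^2) := by
    rw [ed]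
    push_cast
    rw [show ((x:ℝ) - ((x:ℝ) + (k:ℝ)*(a:ℝ)))^2 + ((y:ℝ) - ((y:ℝ) + (k:ℝ)*(b:ℝ)))^2
        = (k:ℝ)^2 * ((a:ℝ)^2 + (b:ℝ)^2) by ring]
    rw [Real.sqrt_mul (sq_nonneg _), Real.sqrt_sq hk0.le]
  rw [hed, Prod.ext_iff]
  constructor
  · simp only [Prod.smul_fst, Prod.fst_sub, smul_eq_mul]
    push_cast
    field_simp
    ring
  · simp only [Prod.smul_snd, Prod.snd_sub, smul_eq_mul]
    push_cast
    field_simp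
    ring

/-- The grid example: for `n = m²` a perfect square, `P = {0,…,m} × {0,…,m}` and
`1/2 ≤ s ≤ 1`, there is a set `G` of pairs of distinct points of `P` with
`|G| ≥ c·n^{1+s}` whose spanned direction set has at most `C·n^{2s-1}` elements,
while no line contains more than `m + 1 = n^{1/2} + 1` points of `P`. -/
theorem stmt9 :
    ∃ c C : ℝ, 0 < c ∧ 0 < C ∧ ∀ (m : ℕ) (s : ℝ), 2 ≤ m → 1/2 ≤ s → s ≤ 1 →
      ∀ n : ℝ, n = (m : ℝ)^2 →
      ∀ P : Finset (ℝ × ℝ),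
        P = ((Finset.range (m+1)) ×ˢ (Finset.range (m+1))).image
              (fun p => ((p.1 : ℝ), (p.2 : ℝ))) →
        (∃ G : Finset ((ℝ × ℝ) × (ℝ × ℝ)), G ⊆ P ×ˢ P ∧
          (∀ pq ∈ G, pq.1 ≠ pq.2) ∧
          c * n ^ (1 + s) ≤ G.card ∧
          ((G.image (fun pq => (ed pq.1 pq.2)⁻¹ • (pq.1 - pq.2))).card : ℝ)
            ≤ C * n ^ (2*s - 1)) ∧
        (∀ p₀ d : ℝ × ℝ, d ≠ 0 →
          (P.filter (fun p => ∃ t : ℝ, p = p₀ + t • d)).card ≤ m + 1) := by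
  refine ⟨1/256, 4, by norm_num, by norm_num, ?_⟩
  intro m s hm hs1 hs2 n hn P hP
  constructor
  · -- existence of G
    have hm0 : (0:ℝ) < m := by positivity
    have hm1 : (1:ℝ) ≤ m := by exact_mod_cast (by omega : 1 ≤ m)
    obtain ⟨r, hr_def⟩ : ∃ r : ℝ, r = (m:ℝ) ^ (2*s - 1) := ⟨_, rfl⟩
    have hr1 : 1 ≤ r := by
      rw [hr_def]
      calc (1:ℝ) = (m:ℝ) ^ (0:ℝ) := by rw [Real.rpow_zero]
        _ ≤ (m:ℝ) ^ (2*s-1) := Real.rpow_le_rpow_of_exponent_le hm1 (by linarith)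
    have hr0 : 0 < r := by linarith
    have hrm : r ≤ (m:ℝ) := by
      rw [hr_def]
      calc (m:ℝ) ^ (2*s-1) ≤ (m:ℝ) ^ (1:ℝ) := Real.rpow_le_rpow_of_exponent_le hm1 (by linarith)
        _ = (m:ℝ) := Real.rpow_one _
    have hpow1 : n ^ (1 + s) = (m:ℝ)^(3:ℕ) * r := by
      rw [hn, hr_def, ← Real.rpow_natCast (m:ℝ) 2, ← Real.rpow_mul hm0.le,
        ← Real.rpow_natCast (m:ℝ) 3, ← Real.rpow_add hm0]
      norm_num
      ring_nf
    have hpow2 : n ^ (2*s - 1) = r * r := by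
      rw [hn, hr_def, ← Real.rpow_natCast (m:ℝ) 2, ← Real.rpow_mul hm0.le,
        ← Real.rpow_add hm0]
      ring_nf
    -- parameters
    obtain ⟨R, hR_def⟩ : ∃ R : ℕ, R = min ⌈r⌉₊ (m/2) := ⟨_, rfl⟩
    have hR1 : 1 ≤ R := by
      rw [hR_def]
      exact le_min (Nat.one_le_ceil_iff.2 hr0) (by omega)
    have hR1' : (1:ℝ) ≤ R := by exact_mod_cast hR1
    have hR2 : 2*R ≤ m := by
      have := min_le_right ⌈r⌉₊ (m/2)
      rw [← hR_def] at this
      omega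
    have hRr : (R:ℝ) ≤ 2*r := by
      have h1 : R ≤ ⌈r⌉₊ := hR_def ▸ min_le_left _ _
      have h2 : (⌈r⌉₊:ℝ) < r + 1 := Nat.ceil_lt_add_one hr0.le
      have h3 : (R:ℝ) ≤ (⌈r⌉₊:ℝ) := by exact_mod_cast h1
      linarith
    have hrR : r ≤ 4*(R:ℝ) := by
      rcases le_or_gt ⌈r⌉₊ (m/2) with h | h
      · have he : R = ⌈r⌉₊ := hR_def ▸ min_eq_left h
        have h2 : r ≤ (⌈r⌉₊:ℝ) := Nat.le_ceil r
        rw [he]; linarith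
      · have hRe : R = m/2 := hR_def ▸ min_eq_right h.le
        have h5 : m ≤ 2*R + 1 := by omega
        have h5' : (m:ℝ) ≤ 2*(R:ℝ)+1 := by exact_mod_cast h5
        linarith
    obtain ⟨K, hK_def⟩ : ∃ K : ℕ, K = m/(2*R) := ⟨_, rfl⟩
    have hK1 : 1 ≤ K := by
      rw [hK_def]
      exact (Nat.one_le_div_iff (by omega)).2 hR2
    have hK1' : (1:ℝ) ≤ K := by exact_mod_cast hK1
    have hKR : 2*(K*R) ≤ m := by
      have h1 := Nat.div_mul_le_self m (2*R)
      rw [← hK_def] at h1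
      calc 2*(K*R) = K*(2*R) := by ring
        _ ≤ m := h1
    have hKreal : (m:ℝ) ≤ 4*((K:ℝ)*(R:ℝ)) := by
      have h1 := Nat.div_add_mod m (2*R)
      rw [← hK_def] at h1
      have h2 : m % (2*R) < 2*R := Nat.mod_lt _ (by omega)
      have h3 : m < 2*R*K + 2*R := by omega
      have h3' : (m:ℝ) < 2*(R:ℝ)*(K:ℝ) + 2*(R:ℝ) := by exact_mod_cast h3
      nlinarith [mul_nonneg (by linarith : (0:ℝ) ≤ (R:ℝ)) (by linarith : (0:ℝ) ≤ (K:ℝ) - 1)]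
    obtain ⟨X, hX_def⟩ : ∃ X : ℕ, X = m/2 + 1 := ⟨_, rfl⟩
    have hX : (m:ℝ) ≤ 2*(X:ℝ) := by
      have : m ≤ 2*X := by omega
      exact_mod_cast this
    -- index set
    obtain ⟨A, hA_def⟩ : ∃ A : Finset (ℕ × ℕ),
        A = (Finset.Icc 1 R ×ˢ Finset.Icc 1 R).filter
          (fun ab => Nat.gcd ab.1 ab.2 = 1) := ⟨_, rfl⟩
    obtain ⟨I, hI_def⟩ : ∃ I : Finset ((ℕ × ℕ) × ℕ × ℕ × ℕ),
        I = A ×ˢ (Finset.Icc 1 K ×ˢ (Finset.range X ×ˢ Finset.range X)) := ⟨_, rfl⟩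
    obtain ⟨f, hf_def⟩ : ∃ f : ((ℕ × ℕ) × ℕ × ℕ × ℕ) → (ℝ × ℝ) × (ℝ × ℝ),
        f = fun i => (((i.2.2.1 : ℝ), (i.2.2.2 : ℝ)),
         (((i.2.2.1 + i.2.1 * i.1.1 : ℕ) : ℝ), ((i.2.2.2 + i.2.1 * i.1.2 : ℕ) : ℝ))) := ⟨_, rfl⟩
    have hIfacts : ∀ i ∈ I, 1 ≤ i.1.1 ∧ i.1.1 ≤ R ∧ 1 ≤ i.1.2 ∧ i.1.2 ≤ R ∧
        Nat.gcd i.1.1 i.1.2 = 1 ∧ 1 ≤ i.2.1 ∧ i.2.1 ≤ K ∧ i.2.2.1 < X ∧ i.2.2.2 < X := by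
      intro i hi
      rw [hI_def] at hi
      simp only [hA_def, Finset.mem_product, Finset.mem_filter, Finset.mem_Icc,
        Finset.mem_range] at hi
      tauto
    have hbound : ∀ i ∈ I, i.2.2.1 + i.2.1 * i.1.1 ≤ m ∧ i.2.2.2 + i.2.1 * i.1.2 ≤ m := by
      intro i hi
      obtain ⟨h1, h2, h3, h4, h5, h6, h7, h8, h9⟩ := hIfacts i hi
      have ha : i.2.1 * i.1.1 ≤ K * R := Nat.mul_le_mul h7 h2
      have hb : i.2.1 * i.1.2 ≤ K * R := Nat.mul_le_mul h7 h4
      have hx' : m/2 + 1 = X := hX_def.symm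
      omega
    have hmemP : ∀ u v : ℕ, u ≤ m → v ≤ m → ((u:ℝ), (v:ℝ)) ∈ P := by
      intro u v hu hv
      rw [hP]
      exact Finset.mem_image.2 ⟨(u, v), Finset.mem_product.2
        ⟨Finset.mem_range.2 (by omega), Finset.mem_range.2 (by omega)⟩, rfl⟩
    refine ⟨I.image f, ?_, ?_, ?_, ?_⟩
    · -- G ⊆ P ×ˢ P
      intro pq hpq
      obtain ⟨i, hi, rfl⟩ := Finset.mem_image.1 hpq
      obtain ⟨hb1, hb2⟩ := hbound i hi
      obtain ⟨_, _, _, _, _, _, _, h8, h9⟩ := hIfacts i hi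
      have hXm : X ≤ m := by omega
      rw [hf_def]
      exact Finset.mem_product.2 ⟨hmemP _ _ (by omega) (by omega), hmemP _ _ hb1 hb2⟩
    · -- distinct
      intro pq hpq
      obtain ⟨i, hi, rfl⟩ := Finset.mem_image.1 hpq
      obtain ⟨h1, _, _, _, _, h6, _, _, _⟩ := hIfacts i hi
      rw [hf_def]
      intro hcon
      have hfst := congrArg Prod.fst hcon
      simp only at hfst
      have h2 : i.2.2.1 = i.2.2.1 + i.2.1 * i.1.1 := by exact_mod_cast hfst
      have h3 : 1 ≤ i.2.1 * i.1.1 := Nat.one_le_iff_ne_zero.2 (Nat.mul_ne_zero (by omega) (by omega))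
      omega
    · -- cardinality lower bound
      have hinj : Set.InjOn f I := by
        intro i hi j hj hij
        obtain ⟨hi1, hi2, hi3, hi4, hi5, hi6, _, _, _⟩ := hIfacts i hi
        obtain ⟨hj1, hj2, hj3, hj4, hj5, hj6, _, _, _⟩ := hIfacts j hj
        rw [hf_def] at hij
        simp only [Prod.ext_iff] at hij
        obtain ⟨⟨e1, e2⟩, e3, e4⟩ := hij
        have ex : i.2.2.1 = j.2.2.1 := by exact_mod_cast e1
        have ey : i.2.2.2 = j.2.2.2 := by exact_mod_cast e2
        have e3' : i.2.2.1 + i.2.1 * i.1.1 = j.2.2.1 + j.2.1 * j.1.1 := by exact_mod_cast e3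
        have e4' : i.2.2.2 + i.2.1 * i.1.2 = j.2.2.2 + j.2.1 * j.1.2 := by exact_mod_cast e4
        have ea : i.2.1 * i.1.1 = j.2.1 * j.1.1 := by omega
        have eb : i.2.1 * i.1.2 = j.2.1 * j.1.2 := by omega
        have hgcd : Nat.gcd (i.2.1 * i.1.1) (i.2.1 * i.1.2) = i.2.1 := by
          rw [Nat.gcd_mul_left, hi5, Nat.mul_one]
        have hgcd' : Nat.gcd (j.2.1 * j.1.1) (j.2.1 * j.1.2) = j.2.1 := by
          rw [Nat.gcd_mul_left, hj5, Nat.mul_one]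
        have ek : i.2.1 = j.2.1 := by rw [← hgcd, ← hgcd', ea, eb]
        rw [ek] at ea eb
        have eA : i.1.1 = j.1.1 := Nat.eq_of_mul_eq_mul_left (by omega) ea
        have eB : i.1.2 = j.1.2 := Nat.eq_of_mul_eq_mul_left (by omega) eb
        exact Prod.ext (Prod.ext eA eB) (Prod.ext ek (Prod.ext ex ey))
      have hcard : (I.image f).card = A.card * (K * (X * X)) := by
        rw [Finset.card_image_of_injOn hinj, hI_def]
        simp [Finset.card_product, Nat.card_Icc]
      have hAc := coprime_count R
      rw [← hA_def] at hAc
      have hAc0 : (0:ℝ) ≤ A.card := by positivity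
      have hcard' : ((I.image f).card : ℝ) = (A.card : ℝ) * K * X * X := by
        rw [hcard]; push_cast; ring
      rw [hpow1, hcard']
      have hK0 : (0:ℝ) ≤ K := by positivity
      have hX0 : (0:ℝ) ≤ X := by positivity
      have hR0 : (0:ℝ) ≤ R := by positivity
      have g1 : (m:ℝ)*(m:ℝ) ≤ (2*X)*(2*X) :=
        mul_le_mul hX hX hm0.le (by positivity)
      have g2 : (m:ℝ)*(m:ℝ)*(m:ℝ) ≤ (2*X)*(2*X)*(4*((K:ℝ)*R)) :=
        mul_le_mul g1 hKreal hm0.le (by positivity)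
      have g3 : (m:ℝ)*(m:ℝ)*(m:ℝ)*(R:ℝ) ≤ (2*X)*(2*X)*(4*((K:ℝ)*R))*(R:ℝ) :=
        mul_le_mul_of_nonneg_right g2 hR0
      have g5 : (2*(X:ℝ))*(2*X)*(4*((K:ℝ)*R))*(R:ℝ) = 16*((X:ℝ)*X*K)*((R:ℝ)*R) := by ring
      have g6 : 16*((X:ℝ)*X*K)*((R:ℝ)*R) ≤ 16*((X:ℝ)*X*K)*(4*(A.card:ℝ)) := by
        apply mul_le_mul_of_nonneg_left _ (by positivity)
        calc (R:ℝ)*R = (R:ℝ)^2 := (sq (R:ℝ)).symm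
          _ ≤ 4*(A.card:ℝ) := hAc
      have g7 : (m:ℝ)^(3:ℕ) * r ≤ (m:ℝ)^(3:ℕ) * (4*R) :=
        mul_le_mul_of_nonneg_left hrR (by positivity)
      have g8 : (m:ℝ)^(3:ℕ) * (4*R) = 4*((m:ℝ)*m*m*R) := by ring
      linarith [g3, g5, g6, g7, g8]
    · -- direction count
      obtain ⟨g, hg_def⟩ : ∃ g : ℕ × ℕ → ℝ × ℝ,
          g = fun ab => ((Real.sqrt ((ab.1:ℝ)^2 + (ab.2:ℝ)^2))⁻¹ * (-(ab.1:ℝ)),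
            (Real.sqrt ((ab.1:ℝ)^2 + (ab.2:ℝ)^2))⁻¹ * (-(ab.2:ℝ))) := ⟨_, rfl⟩
      have hfactor : ∀ i ∈ I,
          (ed (f i).1 (f i).2)⁻¹ • ((f i).1 - (f i).2) = g i.1 := by
        intro i hi
        obtain ⟨h1, _, _, _, _, h6, _, _, _⟩ := hIfacts i hi
        rw [hf_def, hg_def]
        exact dir_eq i.1.1 i.1.2 i.2.1 i.2.2.1 i.2.2.2 h1 h6
      have himg : (I.image f).image (fun pq => (ed pq.1 pq.2)⁻¹ • (pq.1 - pq.2))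
          = I.image (fun i => g i.1) := by
        rw [Finset.image_image]
        exact Finset.image_congr (fun i hi => hfactor i hi)
      rw [himg]
      have h1 : (I.image (fun i => g i.1)).card ≤ A.card := by
        have he : I.image (fun i => g i.1) = (I.image Prod.fst).image g := by
          rw [Finset.image_image]; rfl
        rw [he]
        calc ((I.image Prod.fst).image g).card ≤ (I.image Prod.fst).card := Finset.card_image_le
          _ ≤ A.card := by
              apply Finset.card_le_card
              intro ab hab
              obtain ⟨i, hi, rfl⟩ := Finset.mem_image.1 hab
              rw [hI_def, Finset.mem_product] at hi
              exact hi.1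
      have h2 : A.card ≤ R * R := by
        rw [hA_def]
        calc ((Finset.Icc 1 R ×ˢ Finset.Icc 1 R).filter _).card
            ≤ (Finset.Icc 1 R ×ˢ Finset.Icc 1 R).card := Finset.card_filter_le _ _
          _ = R * R := by simp [Finset.card_product, Nat.card_Icc]
      have h3 : ((I.image (fun i => g i.1)).card : ℝ) ≤ (R:ℝ) * R := by
        have := le_trans h1 h2
        exact_mod_cast this
      rw [hpow2]
      calc ((I.image (fun i => g i.1)).card : ℝ) ≤ (R:ℝ) * R := h3
        _ ≤ (2*r) * (2*r) := mul_le_mul hRr hRr (by positivity) (by positivity)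
        _ = 4 * (r * r) := by ring
  · -- line condition
    intro p₀ d hd
    have hcases : d.1 ≠ 0 ∨ d.2 ≠ 0 := by
      by_contra h
      push_neg at h
      exact hd (Prod.ext h.1 h.2)
    have key : ∀ (π : ℝ × ℝ → ℝ), (∀ t t' : ℝ, π (p₀ + t • d) = π (p₀ + t' • d) → t = t') →
        (∀ p ∈ P, π p ∈ (Finset.range (m+1)).image (fun i : ℕ => (i:ℝ))) →
        (P.filter (fun p => ∃ t : ℝ, p = p₀ + t • d)).card ≤ m + 1 := by
      intro π hπ hmaps
      have h1 : (P.filter (fun p => ∃ t : ℝ, p = p₀ + t • d)).card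
          ≤ ((Finset.range (m+1)).image (fun i : ℕ => (i:ℝ))).card := by
        apply Finset.card_le_card_of_injOn π
        · intro p hp
          exact hmaps p (Finset.mem_filter.1 hp).1
        · intro p hp q hq hpq
          obtain ⟨t, ht⟩ := (Finset.mem_filter.1 hp).2
          obtain ⟨t', ht'⟩ := (Finset.mem_filter.1 hq).2
          rw [ht, ht'] at hpq ⊢
          rw [hπ t t' hpq]
      calc _ ≤ _ := h1
        _ ≤ (Finset.range (m+1)).card := Finset.card_image_le
        _ = m + 1 := Finset.card_range _
    have hmem1 : ∀ p ∈ P, p.1 ∈ (Finset.range (m+1)).image (fun i : ℕ => (i:ℝ)) := by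
      intro p hp
      rw [hP] at hp
      obtain ⟨⟨u,v⟩, huv, rfl⟩ := Finset.mem_image.1 hp
      exact Finset.mem_image.2 ⟨u, (Finset.mem_product.1 huv).1, rfl⟩
    have hmem2 : ∀ p ∈ P, p.2 ∈ (Finset.range (m+1)).image (fun i : ℕ => (i:ℝ)) := by
      intro p hp
      rw [hP] at hp
      obtain ⟨⟨u,v⟩, huv, rfl⟩ := Finset.mem_image.1 hp
      exact Finset.mem_image.2 ⟨v, (Finset.mem_product.1 huv).2, rfl⟩
    rcases hcases with h | h
    · apply key (fun p => p.1) _ hmem1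
      intro t t' htt
      simp only [Prod.fst_add, Prod.smul_fst, smul_eq_mul] at htt
      have := mul_right_cancel₀ h (by linarith : t * d.1 = t' * d.1)
      exact this
    · apply key (fun p => p.2) _ hmem2
      intro t t' htt
      simp only [Prod.snd_add, Prod.smul_snd, smul_eq_mul] at htt
      have := mul_right_cancel₀ h (by linarith : t * d.2 = t' * d.2)
      exact this
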